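/- (Accuracy bound for TPA.) Let M be a column-stochastic n×n real matrix, let 0 < c < 1, and let q, b ∈ ℝ^n be stochastic vectors. Let S ≥ 1 and k ≥ 1 be natural numbers and set T = kS. Define: the exact CPI score vector r_CPI = ∑_{i=0}^{∞} c(1-c)^i M^i q; the family part f = ∑_{i=0}^{S-1} c(1-c)^i M^i q; the approximate neighbor part r̃_neighbor = (((1-c)^S - (1-c)^T)/(1 - (1-c)^S)) · f; the approximate stranger part r̃_stranger = ∑_{i=T}^{∞} c(1-c)^i M^i b; and the TPA score vector r_TPA = f + r̃_neighbor + r̃_stranger. Then ‖r_CPI - r_TPA‖₁ ≤ 2(1-c)^S. -/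

import Mathlib

open Finset

section TPAaux
variable {n : ℕ}

lemma tpa_colsum_pow (M : Matrix (Fin n) (Fin n) ℝ) (hMcol : ∀ j, ∑ i, M i j = 1)
    (i : ℕ) : ∀ j, ∑ a, (M ^ i) a j = 1 := by
  induction i with
  | zero => intro j; simp [Matrix.one_apply]
  | succ m ih =>
    intro j
    rw [pow_succ]
    simp only [Matrix.mul_apply]
    rw [Finset.sum_comm]
    have h : ∀ k ∈ Finset.univ, ∑ a, (M ^ m) a k * M k j = M k j := by
      intro k _
      rw [← Finset.sum_mul, ih k, one_mul]
    rw [Finset.sum_congr rfl h, hMcol j]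

lemma tpa_nonneg_pow (M : Matrix (Fin n) (Fin n) ℝ) (hMnn : ∀ i j, 0 ≤ M i j)
    (i : ℕ) : ∀ a j, 0 ≤ (M ^ i) a j := by
  induction i with
  | zero =>
    intro a j
    rw [pow_zero, Matrix.one_apply]
    split <;> norm_num
  | succ m ih =>
    intro a j
    rw [pow_succ, Matrix.mul_apply]
    exact Finset.sum_nonneg fun x _ => mul_nonneg (ih a x) (hMnn x j)

lemma tpa_sum_mulVec (A : Matrix (Fin n) (Fin n) ℝ) (hcol : ∀ j, ∑ i, A i j = 1)
    (x : Fin n → ℝ) : ∑ j, A.mulVec x j = ∑ j, x j := by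
  simp only [Matrix.mulVec, dotProduct]
  rw [Finset.sum_comm]
  refine Finset.sum_congr rfl fun kk _ => ?_
  rw [← Finset.sum_mul, hcol kk, one_mul]

lemma tpa_l1_mulVec_le (A : Matrix (Fin n) (Fin n) ℝ) (hnn : ∀ i j, 0 ≤ A i j)
    (hcol : ∀ j, ∑ i, A i j = 1) (x : Fin n → ℝ) :
    ∑ j, |A.mulVec x j| ≤ ∑ j, |x j| := by
  have h1 : ∀ j, |A.mulVec x j| ≤ ∑ kk, A j kk * |x kk| := by
    intro j
    simp only [Matrix.mulVec, dotProduct]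
    refine (Finset.abs_sum_le_sum_abs _ _).trans ?_
    refine Finset.sum_le_sum fun kk _ => ?_
    rw [abs_mul, abs_of_nonneg (hnn j kk)]
  calc ∑ j, |A.mulVec x j| ≤ ∑ j, ∑ kk, A j kk * |x kk| :=
        Finset.sum_le_sum fun j _ => h1 j
    _ = ∑ kk, (∑ j, A j kk) * |x kk| := by
        rw [Finset.sum_comm]; exact Finset.sum_congr rfl fun kk _ => (Finset.sum_mul ..).symm
    _ = ∑ kk, |x kk| := by
        refine Finset.sum_congr rfl fun kk _ => ?_; rw [hcol kk, one_mul]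

lemma tpa_geom (c : ℝ) (m : ℕ) : ∑ i ∈ Finset.range m, c * (1 - c) ^ i = 1 - (1 - c) ^ m := by
  induction m with
  | zero => simp
  | succ p ih => rw [Finset.sum_range_succ, ih, pow_succ]; ring

end TPAaux


/-- Accuracy bound for TPA: `‖r_CPI - r_TPA‖₁ ≤ 2(1-c)^S`, where
`r_TPA = f + r̃_neighbor + r̃_stranger` combines the exact family part, the scaled
neighbor approximation, and the PageRank-based stranger approximation. -/
theorem tpa_accuracy_bound {n : ℕ} (M : Matrix (Fin n) (Fin n) ℝ)
    (hMnn : ∀ i j, 0 ≤ M i j) (hMcol : ∀ j, ∑ i, M i j = 1)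
    (c : ℝ) (hc0 : 0 < c) (hc1 : c < 1)
    (q : Fin n → ℝ) (hqnn : ∀ i, 0 ≤ q i) (hq1 : ∑ i, q i = 1)
    (b : Fin n → ℝ) (hbnn : ∀ i, 0 ≤ b i) (hb1 : ∑ i, b i = 1)
    (S k : ℕ) (hS : 1 ≤ S) (hk : 1 ≤ k) (T : ℕ) (hT : T = k * S)
    (rCPI f rNb rSt rTPA : Fin n → ℝ)
    (hrCPI : rCPI = ∑' i : ℕ, (c * (1 - c) ^ i) • (M ^ i).mulVec q)
    (hf : f = ∑ i ∈ Finset.range S, (c * (1 - c) ^ i) • (M ^ i).mulVec q)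
    (hrNb : rNb = (((1 - c) ^ S - (1 - c) ^ T) / (1 - (1 - c) ^ S)) • f)
    (hrSt : rSt = ∑' i : ℕ, (c * (1 - c) ^ (T + i)) • (M ^ (T + i)).mulVec b)
    (hrTPA : rTPA = f + rNb + rSt) :
    ∑ j, |(rCPI - rTPA) j| ≤ 2 * (1 - c) ^ S := by
  have h1c0 : (0:ℝ) ≤ 1 - c := by linarith
  have h1c1 : (1:ℝ) - c < 1 := by linarith
  have hST : S ≤ T := by
    rw [hT]; calc S = 1 * S := (one_mul S).symm
      _ ≤ k * S := Nat.mul_le_mul_right S hk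
  have hgeo : Summable (fun i : ℕ => (1 - c)^i) := summable_geometric_of_lt_one h1c0 h1c1
  -- basic bounds on powers applied to stochastic vectors
  have key : ∀ (v : Fin n → ℝ), (∀ i, 0 ≤ v i) → (∑ i, v i = 1) →
      ∀ (i : ℕ) (j : Fin n), 0 ≤ (M ^ i).mulVec v j ∧ (M ^ i).mulVec v j ≤ 1 := by
    intro v hvnn hv1 i j
    have hnn : ∀ a, 0 ≤ (M ^ i).mulVec v a := by
      intro a
      simp only [Matrix.mulVec, dotProduct]
      exact Finset.sum_nonneg fun x _ => mul_nonneg (tpa_nonneg_pow M hMnn i a x) (hvnn x)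
    have hsum : ∑ a, (M ^ i).mulVec v a = 1 := by
      rw [tpa_sum_mulVec _ (tpa_colsum_pow M hMcol i) v, hv1]
    refine ⟨hnn j, ?_⟩
    calc (M ^ i).mulVec v j ≤ ∑ a, (M ^ i).mulVec v a :=
          Finset.single_le_sum (fun a _ => hnn a) (Finset.mem_univ j)
      _ = 1 := hsum
  -- coordinatewise sequences
  set g : ℕ → Fin n → ℝ := fun i => (c * (1 - c) ^ i) • (M ^ i).mulVec q with hg
  set gb : ℕ → Fin n → ℝ := fun i => (c * (1 - c) ^ i) • (M ^ i).mulVec b with hgb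
  have hcpos : ∀ i : ℕ, 0 ≤ c * (1 - c)^i := fun i => mul_nonneg hc0.le (pow_nonneg h1c0 i)
  have hg_nn : ∀ i j, 0 ≤ g i j := fun i j =>
    mul_nonneg (hcpos i) ((key q hqnn hq1 i j).1)
  have hgb_nn : ∀ i j, 0 ≤ gb i j := fun i j =>
    mul_nonneg (hcpos i) ((key b hbnn hb1 i j).1)
  have hg_le : ∀ i j, g i j ≤ c * (1 - c)^i := by
    intro i j
    have := (key q hqnn hq1 i j).2
    calc g i j = c * (1-c)^i * (M ^ i).mulVec q j := rfl
      _ ≤ c * (1-c)^i * 1 := by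
          exact mul_le_mul_of_nonneg_left this (hcpos i)
      _ = c * (1-c)^i := mul_one _
  have hgb_le : ∀ i j, gb i j ≤ c * (1 - c)^i := by
    intro i j
    have := (key b hbnn hb1 i j).2
    calc gb i j = c * (1-c)^i * (M ^ i).mulVec b j := rfl
      _ ≤ c * (1-c)^i * 1 := mul_le_mul_of_nonneg_left this (hcpos i)
      _ = c * (1-c)^i := mul_one _
  have hgeoc : Summable (fun i : ℕ => c * (1 - c)^i) := hgeo.mul_left c
  have hsumg : ∀ j, Summable (fun i => g i j) := fun j =>
    Summable.of_nonneg_of_le (fun i => hg_nn i j) (fun i => hg_le i j) hgeoc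
  have hsumgb : ∀ j, Summable (fun i => gb i j) := fun j =>
    Summable.of_nonneg_of_le (fun i => hgb_nn i j) (fun i => hgb_le i j) hgeoc
  have hPiq : Summable g := Pi.summable.mpr hsumg
  have hPib : Summable (fun i => gb (T + i)) := by
    refine Pi.summable.mpr fun j => ?_
    have := (hsumgb j).comp_injective (add_right_injective T)
    exact this
  -- coordinatewise formulas
  have hrCPIj : ∀ j, rCPI j = ∑' i, g i j := by
    intro j; rw [hrCPI, tsum_apply hPiq]
  have hrStj : ∀ j, rSt j = ∑' i, gb (T + i) j := by
    intro j; rw [hrSt, tsum_apply hPib]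
  -- split rCPI
  have hsplit : ∀ j, rCPI j = f j + (∑ i ∈ Finset.Ico S T, g i j) + ∑' i, g (T + i) j := by
    intro j
    have h1 : (∑ i ∈ Finset.range T, g i j) + ∑' i, g (i + T) j = ∑' i, g i j :=
      Summable.sum_add_tsum_nat_add T (hsumg j)
    have h2 : (∑ i ∈ Finset.range T, g i j)
        = (∑ i ∈ Finset.range S, g i j) + ∑ i ∈ Finset.Ico S T, g i j := by
      simp only [Finset.range_eq_Ico]
      exact (Finset.sum_Ico_consecutive _ (Nat.zero_le S) hST).symm
    have h3 : (∑' i, g (i + T) j) = ∑' i, g (T + i) j := by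
      congr 1; funext i; rw [add_comm]
    have hfj : f j = ∑ i ∈ Finset.range S, g i j := by
      rw [hf]; simp [hg]
    rw [hrCPIj j, ← h1, h2, h3, hfj]
  -- difference formula
  have hdiff : ∀ j, (rCPI - rTPA) j =
      ((∑ i ∈ Finset.Ico S T, g i j) - rNb j) + ((∑' i, g (T + i) j) - ∑' i, gb (T + i) j) := by
    intro j
    simp only [Pi.sub_apply, hrTPA, Pi.add_apply]
    rw [hsplit j, hrStj j]; ring
  -- Part A : neighbor bound
  have hsum_g_row : ∀ i : ℕ, ∑ j, g i j = c * (1 - c)^i := by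
    intro i
    simp only [hg, Pi.smul_apply, smul_eq_mul]
    rw [← Finset.mul_sum, tpa_sum_mulVec _ (tpa_colsum_pow M hMcol i) q, hq1, mul_one]
  have hnb_sum : ∑ j, ∑ i ∈ Finset.Ico S T, g i j = (1 - c)^S - (1 - c)^T := by
    rw [Finset.sum_comm]
    have : ∑ i ∈ Finset.Ico S T, ∑ j, g i j = ∑ i ∈ Finset.Ico S T, c * (1-c)^i :=
      Finset.sum_congr rfl fun i _ => hsum_g_row i
    rw [this, Finset.sum_Ico_eq_sub _ hST, tpa_geom, tpa_geom]
    ring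
  -- f facts and rNb facts
  have hfnn : ∀ j, 0 ≤ f j := by
    intro j
    rw [hf]
    simp only [Finset.sum_apply]
    exact Finset.sum_nonneg fun i _ => hg_nn i j
  have hf_sum : ∑ j, f j = 1 - (1 - c)^S := by
    rw [hf]
    simp only [Finset.sum_apply]
    rw [Finset.sum_comm]
    rw [Finset.sum_congr rfl fun i _ => hsum_g_row i, tpa_geom]
  have hpowS1 : (1 - c)^S < 1 := pow_lt_one₀ h1c0 h1c1 (by omega)
  have hden_pos : 0 < 1 - (1 - c)^S := by linarith
  have hnum_nn : 0 ≤ (1 - c)^S - (1 - c)^T :=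
    sub_nonneg.mpr (pow_le_pow_of_le_one h1c0 h1c1.le hST)
  have hratio_nn : 0 ≤ ((1 - c)^S - (1 - c)^T) / (1 - (1 - c)^S) :=
    div_nonneg hnum_nn hden_pos.le
  have hrNb_nn : ∀ j, 0 ≤ rNb j := by
    intro j
    rw [hrNb]
    exact mul_nonneg hratio_nn (hfnn j)
  have hrNb_sum : ∑ j, rNb j = (1 - c)^S - (1 - c)^T := by
    rw [hrNb]
    simp only [Pi.smul_apply, smul_eq_mul]
    rw [← Finset.mul_sum, hf_sum, div_mul_cancel₀ _ hden_pos.ne']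
  -- Part A
  have hA : ∑ j, |(∑ i ∈ Finset.Ico S T, g i j) - rNb j|
      ≤ 2 * ((1 - c)^S - (1 - c)^T) := by
    calc ∑ j, |(∑ i ∈ Finset.Ico S T, g i j) - rNb j|
        ≤ ∑ j, ((∑ i ∈ Finset.Ico S T, g i j) + rNb j) := by
          refine Finset.sum_le_sum fun j _ => ?_
          have h1 := abs_sub (∑ i ∈ Finset.Ico S T, g i j) (rNb j)
          rwa [abs_of_nonneg (Finset.sum_nonneg fun i _ => hg_nn i j),
            abs_of_nonneg (hrNb_nn j)] at h1
      _ = (∑ j, ∑ i ∈ Finset.Ico S T, g i j) + ∑ j, rNb j := Finset.sum_add_distrib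
      _ = 2 * ((1 - c)^S - (1 - c)^T) := by rw [hnb_sum, hrNb_sum]; ring
  -- Part B
  have hgeoT : Summable (fun i : ℕ => c * (1 - c)^(T + i)) := by
    have := hgeo.mul_left (c * (1 - c)^T)
    refine this.congr fun i => ?_
    rw [pow_add]; ring
  have habs_le : ∀ i j, |g (T + i) j - gb (T + i) j| ≤ 2 * (c * (1 - c)^(T + i)) := by
    intro i j
    calc |g (T + i) j - gb (T + i) j| ≤ |g (T + i) j| + |gb (T + i) j| := abs_sub _ _
      _ = g (T + i) j + gb (T + i) j := by
          rw [abs_of_nonneg (hg_nn _ j), abs_of_nonneg (hgb_nn _ j)]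
      _ ≤ c * (1 - c)^(T + i) + c * (1 - c)^(T + i) := add_le_add (hg_le _ j) (hgb_le _ j)
      _ = 2 * (c * (1 - c)^(T + i)) := by ring
  have habs_sum : ∀ j, Summable (fun i => |g (T + i) j - gb (T + i) j|) := fun j =>
    Summable.of_nonneg_of_le (fun i => abs_nonneg _) (fun i => habs_le i j)
      (hgeoT.mul_left 2)
  have hsumgT : ∀ j, Summable (fun i => g (T + i) j) := fun j =>
    (hsumg j).comp_injective (add_right_injective T)
  have hsumgbT : ∀ j, Summable (fun i => gb (T + i) j) := fun j =>
    (hsumgb j).comp_injective (add_right_injective T)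
  have hrow : ∀ i : ℕ, ∑ j, |g (T + i) j - gb (T + i) j| ≤ 2 * (c * (1 - c)^(T + i)) := by
    intro i
    have hdiff_eq : ∀ j, g (T + i) j - gb (T + i) j
        = (c * (1 - c)^(T + i)) * ((M ^ (T + i)).mulVec (q - b) j) := by
      intro j
      simp only [hg, hgb, Pi.smul_apply, smul_eq_mul, Matrix.mulVec_sub, Pi.sub_apply]
      ring
    calc ∑ j, |g (T + i) j - gb (T + i) j|
        = ∑ j, (c * (1 - c)^(T + i)) * |(M ^ (T + i)).mulVec (q - b) j| := by
          refine Finset.sum_congr rfl fun j _ => ?_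
          rw [hdiff_eq j, abs_mul, abs_of_nonneg (hcpos _)]
      _ = (c * (1 - c)^(T + i)) * ∑ j, |(M ^ (T + i)).mulVec (q - b) j| :=
          (Finset.mul_sum _ _ _).symm
      _ ≤ (c * (1 - c)^(T + i)) * ∑ j, |(q - b) j| :=
          mul_le_mul_of_nonneg_left
            (tpa_l1_mulVec_le _ (tpa_nonneg_pow M hMnn _) (tpa_colsum_pow M hMcol _) _)
            (hcpos _)
      _ ≤ (c * (1 - c)^(T + i)) * 2 := by
          refine mul_le_mul_of_nonneg_left ?_ (hcpos _)
          calc ∑ j, |(q - b) j| ≤ ∑ j, (q j + b j) := by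
                refine Finset.sum_le_sum fun j _ => ?_
                have h1 := abs_sub (q j) (b j)
                rw [abs_of_nonneg (hqnn j), abs_of_nonneg (hbnn j)] at h1
                simpa using h1
            _ = 2 := by rw [Finset.sum_add_distrib, hq1, hb1]; norm_num
      _ = 2 * (c * (1 - c)^(T + i)) := mul_comm _ _
  have hrow_sum : Summable (fun i : ℕ => ∑ j, |g (T + i) j - gb (T + i) j|) :=
    Summable.of_nonneg_of_le
      (fun i => Finset.sum_nonneg fun j _ => abs_nonneg _)
      hrow (hgeoT.mul_left 2)
  have hB : ∑ j, |(∑' i, g (T + i) j) - ∑' i, gb (T + i) j| ≤ 2 * (1 - c)^T := by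
    calc ∑ j, |(∑' i, g (T + i) j) - ∑' i, gb (T + i) j|
        ≤ ∑ j, ∑' i, |g (T + i) j - gb (T + i) j| := by
          refine Finset.sum_le_sum fun j _ => ?_
          rw [← Summable.tsum_sub (hsumgT j) (hsumgbT j)]
          have := norm_tsum_le_tsum_norm (f := fun i => g (T + i) j - gb (T + i) j)
            (by simpa [Real.norm_eq_abs] using habs_sum j)
          simpa [Real.norm_eq_abs] using this
      _ = ∑' i, ∑ j, |g (T + i) j - gb (T + i) j| :=
          (Summable.tsum_finsetSum fun j _ => habs_sum j).symm
      _ ≤ ∑' i : ℕ, 2 * (c * (1 - c)^(T + i)) := Summable.tsum_le_tsum hrow hrow_sum (hgeoT.mul_left 2)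
      _ = 2 * (1 - c)^T := by
          have h1 : ∀ i : ℕ, 2 * (c * (1 - c)^(T + i)) = (2 * c * (1 - c)^T) * (1 - c)^i := by
            intro i; rw [pow_add]; ring
          rw [tsum_congr h1, tsum_mul_left, tsum_geometric_of_lt_one h1c0 h1c1]
          field_simp
          rw [sub_sub_cancel, mul_div_cancel_left₀ _ hc0.ne']
  -- combine
  calc ∑ j, |(rCPI - rTPA) j|
      ≤ ∑ j, (|(∑ i ∈ Finset.Ico S T, g i j) - rNb j|
          + |(∑' i, g (T + i) j) - ∑' i, gb (T + i) j|) := by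
        refine Finset.sum_le_sum fun j _ => ?_
        rw [hdiff j]
        exact abs_add_le _ _
    _ = (∑ j, |(∑ i ∈ Finset.Ico S T, g i j) - rNb j|)
        + ∑ j, |(∑' i, g (T + i) j) - ∑' i, gb (T + i) j| := Finset.sum_add_distrib
    _ ≤ 2 * ((1 - c)^S - (1 - c)^T) + 2 * (1 - c)^T := add_le_add hA hB
    _ = 2 * (1 - c)^S := by ring
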